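/- Let $\int_n$ denote the simplex iterated integral. For $0 < i < n$ and polynomials $p, q_1,\dots,q_n$ with $p(0)=0$, inserting $p'$ after the $i$-th slot satisfies: $\int_{n+1} q_1\otimes\cdots\otimes q_i\otimes p'\otimes q_{i+1}\otimes\cdots\otimes q_n = -\int_n q_1\otimes\cdots\otimes(q_i p)\otimes q_{i+1}\otimes\cdots\otimes q_n + \int_n q_1\otimes\cdots\otimes q_i\otimes (p\, q_{i+1})\otimes\cdots\otimes q_n$. -/

import Mathlib

open MeasureTheory

/-- The standard simplex `0 ≤ t_1 ≤ ⋯ ≤ t_n ≤ 1` in `ℝⁿ`. -/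
def simplexSet (n : ℕ) : Set (Fin n → ℝ) :=
  {t | (∀ i, t i ∈ Set.Icc (0:ℝ) 1) ∧ Monotone t}

/-- The simplex iterated integral `∫ₙ p₁ ⊗ ⋯ ⊗ pₙ` of `n` polynomials. -/
noncomputable def simplexInt (n : ℕ) (p : Fin n → Polynomial ℝ) : ℝ :=
  ∫ t in simplexSet n, ∏ i, (p i).eval (t i)

open Polynomial

noncomputable def J (r : Polynomial ℝ) : Polynomial ℝ :=
  r.sum fun k a => Polynomial.C (a / (k + 1)) * Polynomial.X ^ (k + 1)

lemma derivative_J (r : Polynomial ℝ) : derivative (J r) = r := by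
  rw [J, Polynomial.sum, map_sum]
  conv_rhs => rw [← r.sum_C_mul_X_pow_eq]
  rw [Polynomial.sum]
  refine Finset.sum_congr rfl fun k _ => ?_
  rw [derivative_C_mul, derivative_X_pow]
  have hk : (k:ℝ) + 1 ≠ 0 := by positivity
  rw [← mul_assoc, ← C_mul]
  push_cast
  rw [div_mul_cancel₀ _ hk]

lemma J_eval_zero (r : Polynomial ℝ) : (J r).eval 0 = 0 := by
  rw [J, Polynomial.sum, eval_finset_sum]
  simp

lemma poly_ext_of_deriv {u v : Polynomial ℝ} (h : derivative u = derivative v)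
    (h0 : u.eval 0 = v.eval 0) : u = v := by
  have hd : derivative (u - v) = 0 := by rw [map_sub, h, sub_self]
  have := Polynomial.eq_C_of_natDegree_eq_zero
    (Polynomial.natDegree_eq_zero_of_derivative_eq_zero hd)
  have h2 : (u - v).coeff 0 = 0 := by
    rw [Polynomial.coeff_zero_eq_eval_zero]; simp [h0]
  rw [h2, map_zero] at this
  exact sub_eq_zero.mp this

lemma J_sub (a b : Polynomial ℝ) : J (a - b) = J a - J b := by
  refine poly_ext_of_deriv ?_ ?_
  · simp [derivative_J]
  · simp [J_eval_zero]

lemma J_parts (p B : Polynomial ℝ) (hp : p.eval 0 = 0) :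
    J (derivative p * B) = p * B - J (p * derivative B) := by
  refine poly_ext_of_deriv ?_ ?_
  · simp only [derivative_J, map_sub, derivative_mul]; ring
  · simp [J_eval_zero, hp]

/-- chain over reversed list -/
noncomputable def chainR : List (Polynomial ℝ) → Polynomial ℝ
  | [] => 1
  | x :: l => J (x * chainR l)

noncomputable def contR : List (Polynomial ℝ) → Polynomial ℝ → Polynomial ℝ
  | [], B => B
  | x :: m, B => contR m (J (x * B))

lemma contR_concat (m : List (Polynomial ℝ)) (x B) :
    contR (m ++ [x]) B = J (x * contR m B) := by
  induction m generalizing B with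
  | nil => simp [contR]
  | cons y m ih => rw [List.cons_append, contR, contR, ih]

lemma chainR_append_eq (m l : List (Polynomial ℝ)) :
    chainR (m ++ l) = contR m.reverse (chainR l) := by
  induction m with
  | nil => simp [contR]
  | cons x m ih =>
      rw [List.cons_append, chainR, ih, List.reverse_cons, contR_concat]

lemma contR_sub (m : List (Polynomial ℝ)) (u v : Polynomial ℝ) :
    contR m (u - v) = contR m u - contR m v := by
  induction m generalizing u v with
  | nil => simp [contR]
  | cons x m ih => simp only [contR, mul_sub, J_sub, ih]

lemma main_list (m k : List (Polynomial ℝ)) (a c p : Polynomial ℝ) (hp : p.eval 0 = 0) :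
    chainR (m ++ c :: derivative p :: a :: k) =
      chainR (m ++ (p * c) :: a :: k) - chainR (m ++ c :: (a * p) :: k) := by
  have key : chainR (c :: derivative p :: a :: k) =
      chainR ((p * c) :: a :: k) - chainR (c :: (a * p) :: k) := by
    have hB : derivative (chainR (a :: k)) = a * chainR k := by
      simp [chainR, derivative_J]
    calc chainR (c :: derivative p :: a :: k)
        = J (c * J (derivative p * chainR (a :: k))) := rfl
      _ = J (c * (p * chainR (a :: k) - J (p * (a * chainR k)))) := by
            rw [J_parts _ _ hp, hB]
      _ = J (p * c * chainR (a :: k) - c * J (a * p * chainR k)) := by ring_nf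
      _ = _ := by
            rw [J_sub]; rfl
  rw [chainR_append_eq, chainR_append_eq, chainR_append_eq, key, contR_sub]

/-- simplex set up to `x` -/
def T (n : ℕ) (x : ℝ) : Set (Fin n → ℝ) :=
  {t | (∀ i, t i ∈ Set.Icc 0 x) ∧ Monotone t}

noncomputable def chainF (n : ℕ) (p : Fin n → Polynomial ℝ) : Polynomial ℝ :=
  chainR (List.ofFn p).reverse

lemma chainF_zero (p : Fin 0 → Polynomial ℝ) : chainF 0 p = 1 := by
  simp [chainF, chainR]

lemma chainF_succ (n : ℕ) (p : Fin (n+1) → Polynomial ℝ) :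
    chainF (n+1) p = J (p (Fin.last n) * chainF n (p ∘ Fin.castSucc)) := by
  rw [chainF, List.ofFn_succ', List.concat_eq_append, List.reverse_append]
  simp [chainR, chainF, Function.comp_def]

lemma isClosed_T (n : ℕ) (x : ℝ) : IsClosed (T n x) := by
  have h1 : T n x = (⋂ i, {t : Fin n → ℝ | t i ∈ Set.Icc 0 x}) ∩ {t | Monotone t} := by
    ext t; simp [T, Set.mem_iInter]
  rw [h1]
  refine IsClosed.inter (isClosed_iInter fun i => ?_) ?_
  · exact IsClosed.preimage (continuous_apply i) isClosed_Icc
  · have h2 : {t : Fin n → ℝ | Monotone t} = ⋂ (i) (j) (_ : i ≤ j), {t | t i ≤ t j} := by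
      ext t; simp only [Set.mem_iInter, Set.mem_setOf_eq]; rfl
    rw [h2]
    exact isClosed_iInter fun i => isClosed_iInter fun j => isClosed_iInter fun _ =>
      isClosed_le (continuous_apply i) (continuous_apply j)

lemma isCompact_T (n : ℕ) (x : ℝ) : IsCompact (T n x) := by
  refine IsCompact.of_isClosed_subset (isCompact_Icc (a := (0 : Fin n → ℝ))
    (b := fun _ => x)) (isClosed_T n x) ?_
  intro t ht
  rw [Set.mem_Icc]
  exact ⟨fun i => (ht.1 i).1, fun i => (ht.1 i).2⟩

lemma continuous_prod_eval (n : ℕ) (p : Fin n → Polynomial ℝ) :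
    Continuous fun t : Fin n → ℝ => ∏ i, (p i).eval (t i) :=
  continuous_finset_prod _ fun i _ => (p i).continuous_aeval.comp (continuous_apply i)

lemma mem_T_insertNth (n : ℕ) (x s : ℝ) (t : Fin n → ℝ) :
    (Fin.last n).insertNth s t ∈ T (n+1) x ↔ s ∈ Set.Icc 0 x ∧ t ∈ T n s := by
  rw [Fin.insertNth_last']
  constructor
  · rintro ⟨h1, h2⟩
    refine ⟨?_, fun i => ⟨?_, ?_⟩, ?_⟩
    · have := h1 (Fin.last n)
      simpa using this
    · have := (h1 (Fin.castSucc i)).1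
      simpa using this
    · have := h2 (Fin.le_last (Fin.castSucc i))
      simpa using this
    · intro a b hab
      have := h2 (Fin.castSucc_le_castSucc_iff.2 hab)
      simpa using this
  · rintro ⟨hs, h1, h2⟩
    refine ⟨fun i => ?_, ?_⟩
    · refine Fin.lastCases ?_ (fun j => ?_) i
      · simpa using hs
      · simp only [Fin.snoc_castSucc]
        exact ⟨(h1 j).1, le_trans (h1 j).2 hs.2⟩
    · intro a b hab
      refine Fin.lastCases ?_ (fun b' hb => ?_) b hab
      · refine Fin.lastCases ?_ (fun a' => ?_) a
        · intro _; exact le_refl _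
        · intro _; simp only [Fin.snoc_castSucc, Fin.snoc_last]
          exact (h1 a').2
      · have ha : a ≤ Fin.castSucc b' := hb
        have : ∃ a', a = Fin.castSucc a' := by
          refine ⟨⟨a.1, ?_⟩, ?_⟩
          · have := ha.trans_lt (Fin.castSucc_lt_last b')
            exact this
          · rfl
        obtain ⟨a', rfl⟩ := this
        simp only [Fin.snoc_castSucc]
        exact h2 (Fin.castSucc_le_castSucc_iff.1 ha)

lemma key (n : ℕ) (p : Fin n → Polynomial ℝ) (x : ℝ) (hx : 0 ≤ x) :
    ∫ t in T n x, ∏ i, (p i).eval (t i) = (chainF n p).eval x := by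
  induction n generalizing x with
  | zero =>
      rw [chainF_zero]
      have hT : T 0 x = Set.univ := by
        ext t
        simp only [T, Set.mem_setOf_eq, Set.mem_univ, iff_true]
        exact ⟨fun i => i.elim0, fun a b _ => le_of_eq (congrArg t (Subsingleton.elim a b))⟩
      rw [hT]
      simp only [Fin.prod_univ_zero, Measure.restrict_univ, integral_const, smul_eq_mul, mul_one, eval_one]
      rw [MeasureTheory.volume_pi, measureReal_def, Measure.pi_univ]
      simp
  | succ n ih =>
      set f : (Fin (n+1) → ℝ) → ℝ := fun t => ∏ i, (p i).eval (t i) with hf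
      set e : ℝ × (Fin n → ℝ) ≃ᵐ (Fin (n+1) → ℝ) :=
        (MeasurableEquiv.piFinSuccAbove (fun _ => ℝ) (Fin.last n)).symm with he
      have hem : MeasurePreserving e :=
        (volume_preserving_piFinSuccAbove (fun _ : Fin (n+1) => ℝ) (Fin.last n)).symm _
      have heapp : ∀ (s : ℝ) (t : Fin n → ℝ), e (s, t) = (Fin.last n).insertNth s t := by
        intro s t
        simp [he, MeasurableEquiv.piFinSuccAbove_symm_apply, Fin.insertNthEquiv]
      have hpre : ∀ (s : ℝ) (t : Fin n → ℝ),
          ((s, t) ∈ e ⁻¹' T (n+1) x ↔ s ∈ Set.Icc 0 x ∧ t ∈ T n s) := by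
        intro s t
        rw [Set.mem_preimage, heapp, mem_T_insertNth]
      have hmpre : MeasurableSet (e ⁻¹' T (n+1) x) :=
        e.measurable (isClosed_T _ x).measurableSet
      have heval : ∀ (s : ℝ) (t : Fin n → ℝ), f (e (s, t)) =
          (p (Fin.last n)).eval s * ∏ i : Fin n, ((p ∘ Fin.castSucc) i).eval (t i) := by
        intro s t
        rw [heapp]
        show (∏ i, (p i).eval ((Fin.last n).insertNth s t i)) = _
        rw [Fin.prod_univ_succAbove
          (fun i => (p i).eval ((Fin.last n).insertNth s t i)) (Fin.last n)]
        simp [Fin.insertNth_apply_same, Fin.insertNth_apply_succAbove, Fin.succAbove_last]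
      set P : Polynomial ℝ := p (Fin.last n) * chainF n (p ∘ Fin.castSucc) with hP
      have hint : IntegrableOn f (T (n+1) x) :=
        (continuous_prod_eval _ p).continuousOn.integrableOn_compact (isCompact_T _ x)
      have hint2 : Integrable
          (Set.indicator (e ⁻¹' T (n+1) x) (fun v => f (e v))) (volume.prod volume) := by
        rw [integrable_indicator_iff hmpre]
        have := (hem.integrableOn_comp_preimage e.measurableEmbedding).2 hint
        rwa [Measure.volume_eq_prod] at this
      have hinner : ∀ s : ℝ,
          (∫ t, Set.indicator (e ⁻¹' T (n+1) x) (fun v => f (e v)) (s, t))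
            = Set.indicator (Set.Icc 0 x) (fun s => P.eval s) s := by
        intro s
        by_cases hs : s ∈ Set.Icc 0 x
        · have h1 : ∀ t, Set.indicator (e ⁻¹' T (n+1) x) (fun v => f (e v)) (s, t)
              = Set.indicator (T n s)
                (fun t => (p (Fin.last n)).eval s *
                  ∏ i : Fin n, ((p ∘ Fin.castSucc) i).eval (t i)) t := by
            intro t
            by_cases ht : t ∈ T n s
            · rw [Set.indicator_of_mem ((hpre s t).2 ⟨hs, ht⟩), Set.indicator_of_mem ht,
                heval]
            · rw [Set.indicator_of_notMem, Set.indicator_of_notMem ht]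
              intro hmem; exact ht ((hpre s t).1 hmem).2
          simp_rw [h1]
          rw [integral_indicator (isClosed_T n s).measurableSet,
            MeasureTheory.integral_const_mul, ih _ s hs.1, Set.indicator_of_mem hs, hP,
            eval_mul]
        · rw [Set.indicator_of_notMem hs]
          have h1 : ∀ t : Fin n → ℝ,
              Set.indicator (e ⁻¹' T (n+1) x) (fun v => f (e v)) (s, t) = 0 := by
            intro t
            rw [Set.indicator_of_notMem]
            intro hmem; exact hs ((hpre s t).1 hmem).1
          simp_rw [h1]
          exact integral_zero _ _
      have hftc : ∫ s in Set.Icc (0:ℝ) x, P.eval s = (J P).eval x := by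
        rw [MeasureTheory.integral_Icc_eq_integral_Ioc, ← intervalIntegral.integral_of_le hx]
        rw [intervalIntegral.integral_eq_sub_of_hasDerivAt
          (f := fun y => (J P).eval y)
          (fun y _ => by simpa [derivative_J] using (J P).hasDerivAt y)
          (P.continuous.intervalIntegrable _ _)]
        rw [J_eval_zero, sub_zero]
      calc ∫ u in T (n+1) x, f u
          = ∫ v in e ⁻¹' T (n+1) x, f (e v) ∂(volume.prod volume) := by
            rw [← Measure.volume_eq_prod]
            exact (hem.setIntegral_preimage_emb e.measurableEmbedding _ _).symm
        _ = ∫ v, Set.indicator (e ⁻¹' T (n+1) x) (fun v => f (e v)) v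
              ∂(volume.prod volume) := (integral_indicator hmpre).symm
        _ = ∫ s, ∫ t, Set.indicator (e ⁻¹' T (n+1) x) (fun v => f (e v)) (s, t) :=
            integral_prod _ hint2
        _ = ∫ s, Set.indicator (Set.Icc 0 x) (fun s => P.eval s) s := by
            simp_rw [hinner]
        _ = ∫ s in Set.Icc (0:ℝ) x, P.eval s := integral_indicator measurableSet_Icc
        _ = (J P).eval x := hftc
        _ = (chainF (n+1) p).eval x := by rw [chainF_succ]

lemma ofFn_insertNth {α : Type*} (n i : ℕ) (h : i < n + 1) (x : α) (q : Fin n → α) :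
    List.ofFn (Fin.insertNth (⟨i, h⟩ : Fin (n + 1)) x q) =
      (List.ofFn q).take i ++ x :: (List.ofFn q).drop i := by
  have hin : i ≤ n := by omega
  apply List.ext_getElem
  · simp; omega
  intro k hk1 hk2
  rw [List.getElem_ofFn]
  rcases lt_trichotomy k i with hki | hki | hki
  · have hkn : k < n := by omega
    have hsa : (⟨i, h⟩ : Fin (n+1)).succAbove ⟨k, hkn⟩ = ⟨k, by omega⟩ := by
      rw [Fin.succAbove_of_castSucc_lt _ _ (by simp [Fin.lt_def]; omega)]
      exact Fin.ext rfl
    rw [show (⟨k, by simpa using hk1⟩ : Fin (n+1)) = (⟨i, h⟩ : Fin (n+1)).succAbove ⟨k, hkn⟩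
        from hsa.symm]
    rw [Fin.insertNth_apply_succAbove]
    rw [List.getElem_append_left (by simp; omega)]
    rw [List.getElem_take, List.getElem_ofFn]
  · have : (⟨k, by simpa using hk1⟩ : Fin (n+1)) = ⟨i, h⟩ := by simp [hki]
    rw [this, Fin.insertNth_apply_same]
    rw [List.getElem_append_right (by simp; omega)]
    simp [hki, hin]
  · have hk' : k < n + 1 := by simpa using hk1
    have hkn : k - 1 < n := by omega
    have hsa : (⟨i, h⟩ : Fin (n+1)).succAbove ⟨k - 1, hkn⟩ = ⟨k, by omega⟩ := by
      rw [Fin.succAbove_of_le_castSucc _ _ (by simp [Fin.le_def]; omega)]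
      exact Fin.ext (show k - 1 + 1 = k by omega)
    rw [show (⟨k, by simpa using hk1⟩ : Fin (n+1)) = (⟨i, h⟩ : Fin (n+1)).succAbove ⟨k - 1, hkn⟩
        from hsa.symm]
    rw [Fin.insertNth_apply_succAbove]
    rw [List.getElem_append_right (by simp; omega)]
    have hlen : ((List.ofFn q).take i).length = i := by simp; omega
    simp only [hlen]
    obtain ⟨m, hm⟩ : ∃ m, k - i = m + 1 := ⟨k - i - 1, by omega⟩
    simp only [hm, List.getElem_cons_succ, List.getElem_drop, List.getElem_ofFn]
    exact congrArg q (Fin.ext (show k - 1 = i + m by omega))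

lemma ofFn_update {α : Type*} [DecidableEq (Fin 1)] (n j : ℕ) (h : j < n) (x : α) (q : Fin n → α) :
    List.ofFn (Function.update q ⟨j, h⟩ x) = (List.ofFn q).set j x := by
  apply List.ext_getElem
  · simp
  intro k hk1 hk2
  rw [List.getElem_ofFn, List.getElem_set]
  by_cases hkj : j = k
  · subst hkj
    simp [Function.update]
  · rw [if_neg hkj, Function.update_of_ne (by simp [Fin.ext_iff]; omega), List.getElem_ofFn]

theorem stmt_4 (n i : ℕ) (hi0 : 0 < i) (hin : i < n)
    (p : Polynomial ℝ) (q : Fin n → Polynomial ℝ) (hp : p.eval 0 = 0) :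
    simplexInt (n + 1)
        (Fin.insertNth (⟨i, by omega⟩ : Fin (n + 1)) (Polynomial.derivative p) q) =
      - simplexInt n
          (Function.update q (⟨i - 1, by omega⟩ : Fin n)
            (q (⟨i - 1, by omega⟩ : Fin n) * p))
        + simplexInt n
            (Function.update q (⟨i, hin⟩ : Fin n) (p * q (⟨i, hin⟩ : Fin n))) := by
  have hSS : ∀ (m : ℕ) (f : Fin m → Polynomial ℝ), simplexInt m f = (chainF m f).eval 1 := by
    intro m f
    have hTe : simplexSet m = T m 1 := rfl
    rw [simplexInt, hTe, key m f 1 zero_le_one]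
  rw [hSS, hSS, hSS]
  set L := List.ofFn q with hL
  have hlen : L.length = n := by simp [hL]
  have hiL : i - 1 < L.length := by omega
  have hiL2 : i < L.length := by omega
  set a : Polynomial ℝ := q ⟨i - 1, by omega⟩ with ha
  set c : Polynomial ℝ := q ⟨i, hin⟩ with hc
  have hga : L[i-1]'hiL = a := by simp only [hL, List.getElem_ofFn]; rfl
  have hgc : L[i]'hiL2 = c := by simp only [hL, List.getElem_ofFn]; rfl
  have F2 : L.drop i = c :: L.drop (i+1) := by
    rw [List.drop_eq_getElem_cons hiL2, hgc]
  have F1 : L.take i = L.take (i-1) ++ [a] := by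
    conv_lhs => rw [show i = i - 1 + 1 by omega]
    rw [List.take_succ, List.getElem?_eq_getElem hiL, hga]
    rfl
  have F3 : L.drop (i-1) = a :: c :: L.drop (i+1) := by
    rw [List.drop_eq_getElem_cons hiL, hga, show i - 1 + 1 = i by omega, F2]
  have Hins : List.ofFn (Fin.insertNth (⟨i, by omega⟩ : Fin (n+1)) (derivative p) q)
      = L.take (i-1) ++ a :: derivative p :: c :: L.drop (i+1) := by
    rw [ofFn_insertNth n i (by omega), ← hL, F1, F2]
    simp
  have H1 : List.ofFn (Function.update q (⟨i-1, by omega⟩ : Fin n) (a * p))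
      = L.take (i-1) ++ (a * p) :: c :: L.drop (i+1) := by
    rw [ofFn_update n (i-1) (by omega), ← hL,
      List.set_eq_take_cons_drop _ hiL, show i - 1 + 1 = i by omega, F2]
  have H2 : List.ofFn (Function.update q (⟨i, hin⟩ : Fin n) (p * c))
      = L.take (i-1) ++ a :: (p * c) :: L.drop (i+1) := by
    rw [ofFn_update n i hin, ← hL, List.set_eq_take_cons_drop _ hiL2, F1]
    simp
  have hrev : ∀ (k z : List (Polynomial ℝ)) (u v w : Polynomial ℝ),
      (k ++ u :: v :: w :: z).reverse = z.reverse ++ w :: v :: u :: k.reverse := by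
    intro k z u v w; simp
  have hrev2 : ∀ (k z : List (Polynomial ℝ)) (u v : Polynomial ℝ),
      (k ++ u :: v :: z).reverse = z.reverse ++ v :: u :: k.reverse := by
    intro k z u v; simp
  rw [show chainF (n+1) (Fin.insertNth (⟨i, by omega⟩ : Fin (n + 1)) (derivative p) q)
      = chainR ((L.take (i-1) ++ a :: derivative p :: c :: L.drop (i+1)).reverse) by
      rw [chainF, Hins]]
  rw [show chainF n (Function.update q (⟨i-1, by omega⟩ : Fin n) (a * p))
      = chainR ((L.take (i-1) ++ (a * p) :: c :: L.drop (i+1)).reverse) by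
      rw [chainF, H1]]
  rw [show chainF n (Function.update q (⟨i, hin⟩ : Fin n) (p * c))
      = chainR ((L.take (i-1) ++ a :: (p * c) :: L.drop (i+1)).reverse) by
      rw [chainF, H2]]
  rw [hrev, hrev2, hrev2]
  rw [main_list ((L.drop (i+1)).reverse) ((L.take (i-1)).reverse) a c p hp]
  rw [eval_sub]
  ring
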